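/- arXiv:1312.1185 — 3 statements merged into one kernel-verified Lean document; each statement's English description precedes it below -/
import Mathlib

section
/- Let $(x_1,\ldots,x_n)$ and $(y_1,\ldots,y_n)$ be two tuples of real numbers. Assign to every permutation $\sigma$ of $\{1,\ldots,n\}$ the weight $\epsilon_\sigma = 0$ if $x_{\sigma(1)} + x_{\sigma(2)} + \cdots + x_{\sigma(k)} < y_k$ for some $k \in \{1,\ldots,n\}$, and $\epsilon_\sigma = \mathrm{sign}(\sigma)$ otherwise. Then $\sum_{\sigma \in S_n} \epsilon_\sigma \leq \sqrt{n}^{\,n}$. -/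
open Finset

namespace SumWeightsAux

variable {n : ℕ}

/-- Sign factor: `(-1)^#{b ∈ A | a < b}`. -/
def sgn (a : Fin n) (A : Finset (Fin n)) : ℝ :=
  (-1 : ℝ) ^ (A.filter fun b => a < b).card

lemma sgn_mul_self (a : Fin n) (A : Finset (Fin n)) : sgn a A * sgn a A = 1 := by
  rw [sgn, ← pow_add]
  exact Even.neg_one_pow ⟨_, rfl⟩

/-- Gate: indicator that the `k`-th prefix-sum condition holds for the set `A`. -/
noncomputable def gate (x y : Fin n → ℝ) (k : ℕ) (A : Finset (Fin n)) : ℝ :=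
  if h : k < n then (if (∑ j ∈ A, x j) < y ⟨k, h⟩ then 0 else 1) else 1

lemma gate_nonneg (x y : Fin n → ℝ) (k : ℕ) (A : Finset (Fin n)) :
    gate x y k A = 0 ∨ gate x y k A = 1 := by
  unfold gate; split_ifs <;> simp

/-- The chain vector: `w k A` is the signed number of admissible chains of sets ending at `A`. -/
noncomputable def w (x y : Fin n → ℝ) : ℕ → Finset (Fin n) → ℝ
  | 0 => fun A => if A = ∅ then 1 else 0
  | (k+1) => fun A =>
      if A.card = k + 1 then
        gate x y k A * ∑ a ∈ A, sgn a A * w x y k (A.erase a)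
      else 0

lemma w_succ (x y : Fin n → ℝ) (k : ℕ) (A : Finset (Fin n)) :
    w x y (k+1) A
      = if A.card = k + 1 then gate x y k A * ∑ a ∈ A, sgn a A * w x y k (A.erase a)
        else 0 := rfl

/-- The per-permutation partial product. -/
noncomputable def F (x y : Fin n → ℝ) (k : ℕ) (f : Fin k → Fin n) : ℝ :=
  ∏ j : Fin k, (gate x y (j : ℕ) ((Iic j).image f) * sgn (f j) ((Iic j).image f))

end SumWeightsAux

section Identity

open SumWeightsAux

variable {n : ℕ}

/-- The key sign cancellation. -/
lemma sgn_cross {a b : Fin n} {B : Finset (Fin n)} (hab : a ≠ b) (ha : a ∉ B) (hb : b ∉ B) :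
    sgn a (insert a (insert b B)) * sgn b (insert a (insert b B))
      = -(sgn a (insert a B) * sgn b (insert b B)) := by
  have hswap : insert a (insert b B) = insert b (insert a B) := Finset.insert_comm a b B
  have hbf : b ∉ B.filter (fun c => a < c) := fun h => hb (mem_of_mem_filter b h)
  have haf : a ∉ B.filter (fun c => b < c) := fun h => ha (mem_of_mem_filter a h)
  unfold sgn
  have e3 : ((insert a B).filter (fun c => a < c)).card = (B.filter (fun c => a < c)).card := by
    rw [filter_insert, if_neg (lt_irrefl a)]
  have e4 : ((insert b B).filter (fun c => b < c)).card = (B.filter (fun c => b < c)).card := by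
    rw [filter_insert, if_neg (lt_irrefl b)]
  rcases hab.lt_or_gt with h | h
  · have e1 : ((insert a (insert b B)).filter (fun c => a < c)).card
        = (B.filter (fun c => a < c)).card + 1 := by
      rw [filter_insert, if_neg (lt_irrefl a), filter_insert, if_pos h,
        card_insert_of_notMem hbf]
    have e2 : ((insert a (insert b B)).filter (fun c => b < c)).card
        = (B.filter (fun c => b < c)).card := by
      rw [hswap, filter_insert, if_neg (lt_irrefl b), filter_insert, if_neg (asymm h)]
    rw [e1, e2, e3, e4, pow_succ]
    ring
  · have e1 : ((insert a (insert b B)).filter (fun c => a < c)).card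
        = (B.filter (fun c => a < c)).card := by
      rw [filter_insert, if_neg (lt_irrefl a), filter_insert, if_neg (asymm h)]
    have e2 : ((insert a (insert b B)).filter (fun c => b < c)).card
        = (B.filter (fun c => b < c)).card + 1 := by
      rw [hswap, filter_insert, if_neg (lt_irrefl b), filter_insert, if_pos h,
        card_insert_of_notMem haf]
    rw [e1, e2, e3, e4, pow_succ]
    ring

/-- For a fixed element, summing over sets containing it equals summing over sets
not containing it, after inserting. -/
lemma sum_sets_mem (a : Fin n) (G : Finset (Fin n) → ℝ) :
    ∑ A ∈ (univ : Finset (Finset (Fin n))).filter (fun A => a ∈ A), G A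
      = ∑ B ∈ (univ : Finset (Finset (Fin n))).filter (fun B => a ∉ B), G (insert a B) := by
  refine Finset.sum_nbij' (fun A => A.erase a) (fun B => insert a B) ?_ ?_ ?_ ?_ ?_ <;>
    intro A hA <;> simp only [mem_filter, mem_univ, true_and] at hA ⊢
  · exact notMem_erase a A
  · exact mem_insert_self a A
  · exact insert_erase hA
  · exact erase_insert hA
  · rw [insert_erase hA]

lemma sum_sets_mem2 {a b : Fin n} (hab : a ≠ b) (G : Finset (Fin n) → ℝ) :
    ∑ A ∈ (univ : Finset (Finset (Fin n))).filter (fun A => a ∈ A ∧ b ∈ A), G A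
      = ∑ B ∈ (univ : Finset (Finset (Fin n))).filter (fun B => a ∉ B ∧ b ∉ B),
          G (insert a (insert b B)) := by
  refine Finset.sum_nbij' (fun A => (A.erase a).erase b) (fun B => insert a (insert b B))
    ?_ ?_ ?_ ?_ ?_ <;>
    intro A hA <;> simp only [mem_filter, mem_univ, true_and] at hA ⊢
  · constructor
    · intro h
      exact (notMem_erase a A) (mem_of_mem_erase h)
    · exact notMem_erase b _
  · exact ⟨mem_insert_self a _, mem_insert_of_mem (mem_insert_self b _)⟩
  · have hbA : b ∈ A.erase a := mem_erase.mpr ⟨hab.symm, hA.2⟩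
    rw [insert_erase hbA, insert_erase hA.1]
  · have h1 : a ∉ insert b A := by
      simp only [mem_insert]
      rintro (rfl | h)
      · exact hab rfl
      · exact hA.1 h
    rw [erase_insert h1, erase_insert hA.2]
  · have hbA : b ∈ A.erase a := mem_erase.mpr ⟨hab.symm, hA.2⟩
    rw [insert_erase hbA, insert_erase hA.1]

lemma ite_sum_zero {α : Type*} {P : Prop} [Decidable P] (s : Finset α) (h : α → ℝ) :
    (if P then ∑ b ∈ s, h b else 0) = ∑ b ∈ s, if P then h b else 0 := by
  split_ifs <;> simp

lemma mem_set_eq_filter (A : Finset (Fin n)) : A = univ.filter (fun b => b ∈ A) := by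
  simp [Finset.filter_univ_mem]

lemma erase_eq_filter (A : Finset (Fin n)) (a : Fin n) :
    A.erase a = univ.filter (fun b => b ≠ a ∧ b ∈ A) := by
  ext b; simp [mem_erase]

lemma compl_eq_filter (B : Finset (Fin n)) : Bᶜ = univ.filter (fun b => b ∉ B) := by
  ext b; simp [mem_compl]

lemma compl_erase_eq_filter (B : Finset (Fin n)) (a : Fin n) :
    Bᶜ.erase a = univ.filter (fun b => b ≠ a ∧ b ∉ B) := by
  ext b; simp [mem_erase, mem_compl]

/-- The derivation/contraction Pythagoras identity. -/
lemma key_identity (g : Finset (Fin n) → ℝ) :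
    (∑ A : Finset (Fin n), (∑ a ∈ A, sgn a A * g (A.erase a))^2)
      + (∑ B : Finset (Fin n), (∑ a ∈ Bᶜ, sgn a (insert a B) * g (insert a B))^2)
      = n * ∑ E : Finset (Fin n), (g E)^2 := by
  classical
  -- expand the squares
  have expandD : ∀ A : Finset (Fin n),
      (∑ a ∈ A, sgn a A * g (A.erase a))^2
        = (∑ a ∈ A, g (A.erase a)^2)
          + ∑ a ∈ A, ∑ b ∈ A.erase a,
              (sgn a A * g (A.erase a)) * (sgn b A * g (A.erase b)) := by
    intro A
    rw [sq, Finset.sum_mul_sum, ← Finset.sum_add_distrib]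
    refine Finset.sum_congr rfl fun a ha => ?_
    rw [← Finset.add_sum_erase _ _ ha]
    congr 1
    rw [mul_mul_mul_comm, sgn_mul_self, one_mul, sq]
  have expandC : ∀ B : Finset (Fin n),
      (∑ a ∈ Bᶜ, sgn a (insert a B) * g (insert a B))^2
        = (∑ a ∈ Bᶜ, g (insert a B)^2)
          + ∑ a ∈ Bᶜ, ∑ b ∈ Bᶜ.erase a,
              (sgn a (insert a B) * g (insert a B)) * (sgn b (insert b B) * g (insert b B)) := by
    intro B
    rw [sq, Finset.sum_mul_sum, ← Finset.sum_add_distrib]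
    refine Finset.sum_congr rfl fun a ha => ?_
    rw [← Finset.add_sum_erase _ _ ha]
    congr 1
    rw [mul_mul_mul_comm, sgn_mul_self, one_mul, sq]
  simp only [expandD, expandC, Finset.sum_add_distrib]
  -- Diagonal terms
  have diagD : (∑ A : Finset (Fin n), ∑ a ∈ A, g (A.erase a)^2)
      = ∑ a : Fin n, ∑ B ∈ univ.filter (fun B : Finset (Fin n) => a ∉ B), g B ^ 2 := by
    have h1 : ∀ A : Finset (Fin n), (∑ a ∈ A, g (A.erase a)^2)
        = ∑ a : Fin n, if a ∈ A then g (A.erase a)^2 else 0 := by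
      intro A
      rw [Finset.sum_ite_mem, univ_inter]
    simp only [h1]
    rw [Finset.sum_comm]
    refine Finset.sum_congr rfl fun a _ => ?_
    rw [← Finset.sum_filter, sum_sets_mem a (fun A => g (A.erase a)^2)]
    refine Finset.sum_congr rfl fun B hB => ?_
    simp only [mem_filter, mem_univ, true_and] at hB
    rw [erase_insert hB]
  have diagC : (∑ B : Finset (Fin n), ∑ a ∈ Bᶜ, g (insert a B)^2)
      = ∑ a : Fin n, ∑ A ∈ univ.filter (fun A : Finset (Fin n) => a ∈ A), g A ^ 2 := by
    have h1 : ∀ B : Finset (Fin n), (∑ a ∈ Bᶜ, g (insert a B)^2)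
        = ∑ a : Fin n, if a ∉ B then g (insert a B)^2 else 0 := by
      intro B
      rw [← Finset.sum_filter, ← compl_eq_filter]
    simp only [h1]
    rw [Finset.sum_comm]
    refine Finset.sum_congr rfl fun a _ => ?_
    rw [← Finset.sum_filter, ← sum_sets_mem a (fun A => g A ^ 2)]
  -- Cross terms
  have crossD : ∀ (a b : Fin n) (hab : b ≠ a),
      (∑ A ∈ univ.filter (fun A : Finset (Fin n) => a ∈ A ∧ b ∈ A),
        (sgn a A * g (A.erase a)) * (sgn b A * g (A.erase b)))
      = - ∑ B ∈ univ.filter (fun B : Finset (Fin n) => a ∉ B ∧ b ∉ B),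
        (sgn a (insert a B) * g (insert a B)) * (sgn b (insert b B) * g (insert b B)) := by
    intro a b hab
    rw [sum_sets_mem2 (fun h => hab h.symm)
      (fun A => (sgn a A * g (A.erase a)) * (sgn b A * g (A.erase b))), ← Finset.sum_neg_distrib]
    refine Finset.sum_congr rfl fun B hB => ?_
    simp only [mem_filter, mem_univ, true_and] at hB
    obtain ⟨ha, hb⟩ := hB
    have hA1 : (insert a (insert b B)).erase a = insert b B := by
      refine erase_insert ?_
      simp only [mem_insert]
      rintro (rfl | h)
      · exact hab rfl
      · exact ha h
    have hA2 : (insert a (insert b B)).erase b = insert a B := by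
      rw [Finset.insert_comm]
      refine erase_insert ?_
      simp only [mem_insert]
      rintro (rfl | h)
      · exact hab rfl
      · exact hb h
    rw [hA1, hA2]
    have hs := sgn_cross (fun h => hab h.symm) ha hb
    linear_combination (g (insert b B) * g (insert a B)) * hs
  have crossSum :
      (∑ A : Finset (Fin n), ∑ a ∈ A, ∑ b ∈ A.erase a,
          (sgn a A * g (A.erase a)) * (sgn b A * g (A.erase b)))
      + (∑ B : Finset (Fin n), ∑ a ∈ Bᶜ, ∑ b ∈ Bᶜ.erase a,
          (sgn a (insert a B) * g (insert a B)) * (sgn b (insert b B) * g (insert b B)))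
      = 0 := by
    have hX : (∑ A : Finset (Fin n), ∑ a ∈ A, ∑ b ∈ A.erase a,
          (sgn a A * g (A.erase a)) * (sgn b A * g (A.erase b)))
        = ∑ a : Fin n, ∑ b : Fin n, ∑ A : Finset (Fin n),
            if a ∈ A ∧ b ≠ a ∧ b ∈ A then
              (sgn a A * g (A.erase a)) * (sgn b A * g (A.erase b)) else 0 := by
      have h1 : ∀ A : Finset (Fin n), (∑ a ∈ A, ∑ b ∈ A.erase a,
            (sgn a A * g (A.erase a)) * (sgn b A * g (A.erase b)))
          = ∑ a : Fin n, ∑ b : Fin n,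
            if a ∈ A ∧ b ≠ a ∧ b ∈ A then
              (sgn a A * g (A.erase a)) * (sgn b A * g (A.erase b)) else 0 := by
        intro A
        trans (∑ a : Fin n, if a ∈ A then
            ∑ b ∈ A.erase a, (sgn a A * g (A.erase a)) * (sgn b A * g (A.erase b)) else 0)
        · rw [Finset.sum_ite_mem, univ_inter]
        · refine Finset.sum_congr rfl fun a _ => ?_
          rw [erase_eq_filter A a, Finset.sum_filter, _root_.ite_sum_zero]
          exact Finset.sum_congr rfl fun b _ => (ite_and _ _ _ _).symm
      simp only [h1]
      rw [Finset.sum_comm]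
      refine Finset.sum_congr rfl fun a _ => ?_
      rw [Finset.sum_comm]
    have hY : (∑ B : Finset (Fin n), ∑ a ∈ Bᶜ, ∑ b ∈ Bᶜ.erase a,
          (sgn a (insert a B) * g (insert a B)) * (sgn b (insert b B) * g (insert b B)))
        = ∑ a : Fin n, ∑ b : Fin n, ∑ B : Finset (Fin n),
            if a ∉ B ∧ b ≠ a ∧ b ∉ B then
              (sgn a (insert a B) * g (insert a B)) * (sgn b (insert b B) * g (insert b B))
            else 0 := by
      have h1 : ∀ B : Finset (Fin n), (∑ a ∈ Bᶜ, ∑ b ∈ Bᶜ.erase a,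
            (sgn a (insert a B) * g (insert a B)) * (sgn b (insert b B) * g (insert b B)))
          = ∑ a : Fin n, ∑ b : Fin n,
            if a ∉ B ∧ b ≠ a ∧ b ∉ B then
              (sgn a (insert a B) * g (insert a B)) * (sgn b (insert b B) * g (insert b B))
            else 0 := by
        intro B
        trans (∑ a : Fin n, if a ∉ B then
            ∑ b ∈ Bᶜ.erase a, (sgn a (insert a B) * g (insert a B))
              * (sgn b (insert b B) * g (insert b B)) else 0)
        · rw [← Finset.sum_filter, ← compl_eq_filter]
        · refine Finset.sum_congr rfl fun a _ => ?_
          rw [compl_erase_eq_filter B a, Finset.sum_filter, _root_.ite_sum_zero]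
          exact Finset.sum_congr rfl fun b _ => (ite_and _ _ _ _).symm
      simp only [h1]
      rw [Finset.sum_comm]
      refine Finset.sum_congr rfl fun a _ => ?_
      rw [Finset.sum_comm]
    rw [hX, hY, ← Finset.sum_add_distrib]
    refine Finset.sum_eq_zero fun a _ => ?_
    rw [← Finset.sum_add_distrib]
    refine Finset.sum_eq_zero fun b _ => ?_
    by_cases hab : b = a
    · simp [hab]
    · have e1 : (∑ A : Finset (Fin n),
          if a ∈ A ∧ b ≠ a ∧ b ∈ A then
            (sgn a A * g (A.erase a)) * (sgn b A * g (A.erase b)) else 0)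
          = ∑ A ∈ univ.filter (fun A : Finset (Fin n) => a ∈ A ∧ b ∈ A),
            (sgn a A * g (A.erase a)) * (sgn b A * g (A.erase b)) := by
        rw [Finset.sum_filter]
        refine Finset.sum_congr rfl fun A _ => ?_
        simp [hab]
      have e2 : (∑ B : Finset (Fin n),
          if a ∉ B ∧ b ≠ a ∧ b ∉ B then
            (sgn a (insert a B) * g (insert a B)) * (sgn b (insert b B) * g (insert b B))
          else 0)
          = ∑ B ∈ univ.filter (fun B : Finset (Fin n) => a ∉ B ∧ b ∉ B),
            (sgn a (insert a B) * g (insert a B)) * (sgn b (insert b B) * g (insert b B)) := by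
        rw [Finset.sum_filter]
        refine Finset.sum_congr rfl fun B _ => ?_
        simp [hab]
      rw [e1, e2, crossD a b hab]
      ring
  -- put everything together
  rw [add_add_add_comm, crossSum, add_zero, diagD, diagC, ← Finset.sum_add_distrib]
  have : ∀ a : Fin n,
      ((∑ B ∈ univ.filter (fun B : Finset (Fin n) => a ∉ B), g B ^ 2)
        + ∑ A ∈ univ.filter (fun A : Finset (Fin n) => a ∈ A), g A ^ 2)
      = ∑ E : Finset (Fin n), g E ^ 2 := by
    intro a
    rw [add_comm]
    exact Finset.sum_filter_add_sum_filter_not univ _ _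
  simp only [this]
  rw [Finset.sum_const, card_univ, Fintype.card_fin, nsmul_eq_mul]

end Identity

section Chain

open SumWeightsAux

variable {n : ℕ} (x y : Fin n → ℝ)

lemma sign_eq_signAux (σ : Equiv.Perm (Fin n)) : Equiv.Perm.sign σ = Equiv.Perm.signAux σ := by
  refine Equiv.Perm.swap_induction_on σ ?_ ?_
  · simp [Equiv.Perm.signAux_one]
  · intro f a b hab ih
    rw [Equiv.Perm.sign_mul, Equiv.Perm.signAux_mul, ih, Equiv.Perm.sign_swap hab,
      Equiv.Perm.signAux_swap hab]

/-- Fact A : sign as product of local signs. -/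
lemma sign_eq_prod_sgn (σ : Equiv.Perm (Fin n)) :
    ((Equiv.Perm.sign σ : ℤ) : ℝ) = ∏ k : Fin n, sgn (σ k) ((Iic k).image σ) := by
  rw [sign_eq_signAux σ]
  have h1 : ((Equiv.Perm.signAux σ : ℤ) : ℝ)
      = ∏ p ∈ Equiv.Perm.finPairsLT n, (if σ p.1 ≤ σ p.2 then (-1 : ℝ) else 1) := by
    unfold Equiv.Perm.signAux
    push_cast
    rw [Finset.prod_congr rfl (fun p _ => ?_)]
    split_ifs <;> norm_num
  rw [h1]
  unfold Equiv.Perm.finPairsLT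
  rw [Finset.prod_sigma]
  refine Finset.prod_congr rfl fun a _ => ?_
  rw [Finset.prod_ite, Finset.prod_const, Finset.prod_const, one_pow, mul_one]
  unfold sgn
  congr 1
  have himg : ((Iic a).image σ).filter (fun c => σ a < c)
      = ((Iic a).filter (fun b => σ a < σ b)).image σ := Finset.filter_image
  rw [himg, Finset.card_image_of_injective _ σ.injective]
  congr 1
  ext b
  simp only [mem_filter, mem_Iic, Finset.mem_attachFin, Finset.mem_range]
  constructor
  · rintro ⟨hba, hab⟩
    have hlt : b < a := Fin.lt_def.mpr hba
    refine ⟨le_of_lt hlt, lt_of_le_of_ne hab fun h => ?_⟩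
    exact (Fin.ne_of_lt hlt) (σ.injective h).symm
  · rintro ⟨hba, hab⟩
    have hne : b ≠ a := fun h => absurd hab (by rw [h]; exact lt_irrefl _)
    exact ⟨Fin.lt_def.mp (lt_of_le_of_ne hba hne), le_of_lt hab⟩

lemma snoc_injective_iff {k : ℕ} (g : Fin k → Fin n) (a : Fin n) :
    Function.Injective (Fin.snoc g a : Fin (k+1) → Fin n)
      ↔ Function.Injective g ∧ ∀ i, g i ≠ a := by
  constructor
  · intro h
    constructor
    · intro i j hij
      have : (Fin.snoc g a : Fin (k+1) → Fin n) i.castSucc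
          = (Fin.snoc g a : Fin (k+1) → Fin n) j.castSucc := by
        rwa [Fin.snoc_castSucc, Fin.snoc_castSucc]
      exact Fin.castSucc_injective _ (h this)
    · intro i hi
      have : (Fin.snoc g a : Fin (k+1) → Fin n) i.castSucc
          = (Fin.snoc g a : Fin (k+1) → Fin n) (Fin.last k) := by
        rwa [Fin.snoc_castSucc, Fin.snoc_last]
      exact absurd (h this) (Fin.ne_of_lt (Fin.castSucc_lt_last i))
  · rintro ⟨hg, hga⟩ i j hij
    rcases Fin.eq_castSucc_or_eq_last i with ⟨i', rfl⟩ | rfl <;>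
      rcases Fin.eq_castSucc_or_eq_last j with ⟨j', rfl⟩ | rfl
    · rw [Fin.snoc_castSucc, Fin.snoc_castSucc] at hij
      rw [hg hij]
    · rw [Fin.snoc_castSucc, Fin.snoc_last] at hij
      exact absurd hij (hga i')
    · rw [Fin.snoc_castSucc, Fin.snoc_last] at hij
      exact absurd hij.symm (hga j')
    · rfl

lemma image_snoc {k : ℕ} (g : Fin k → Fin n) (a : Fin n) :
    (univ : Finset (Fin (k+1))).image (Fin.snoc g a : Fin (k+1) → Fin n)
      = insert a (univ.image g) := by
  ext c
  simp only [mem_image, mem_insert, mem_univ, true_and]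
  constructor
  · rintro ⟨i, rfl⟩
    rcases Fin.eq_castSucc_or_eq_last i with ⟨i', rfl⟩ | rfl
    · right; exact ⟨i', by simp⟩
    · left; simp
  · rintro (rfl | ⟨i, rfl⟩)
    · exact ⟨Fin.last k, by simp⟩
    · exact ⟨i.castSucc, by simp⟩

lemma Iic_castSucc_image {k : ℕ} (g : Fin k → Fin n) (a : Fin n) (j : Fin k) :
    (Iic (Fin.castSucc j)).image (Fin.snoc g a : Fin (k+1) → Fin n) = (Iic j).image g := by
  ext c
  simp only [mem_image, mem_Iic]
  constructor
  · rintro ⟨b, hb, rfl⟩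
    rcases Fin.eq_castSucc_or_eq_last b with ⟨b', rfl⟩ | rfl
    · exact ⟨b', Fin.castSucc_le_castSucc_iff.mp hb, by simp⟩
    · exact absurd hb (not_le.mpr (Fin.castSucc_lt_last j))
  · rintro ⟨b, hb, rfl⟩
    exact ⟨b.castSucc, Fin.castSucc_le_castSucc_iff.mpr hb, by simp⟩

lemma Iic_last_eq_univ {k : ℕ} : (Iic (Fin.last k) : Finset (Fin (k+1))) = univ := by
  ext b; simp [Fin.le_last]

lemma F_snoc {k : ℕ} (g : Fin k → Fin n) (a : Fin n) :
    F x y (k+1) (Fin.snoc g a)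
      = F x y k g * (gate x y k (insert a (univ.image g)) * sgn a (insert a (univ.image g))) := by
  unfold F
  rw [Fin.prod_univ_castSucc]
  congr 1
  · refine Finset.prod_congr rfl fun j _ => ?_
    rw [Iic_castSucc_image, Fin.snoc_castSucc, Fin.coe_castSucc]
  · rw [Iic_last_eq_univ, Fin.snoc_last, Fin.val_last, image_snoc]

lemma L1 : ∀ k : ℕ, ∀ A : Finset (Fin n),
    w x y k A = ∑ f : Fin k → Fin n,
      if Function.Injective f ∧ univ.image f = A then F x y k f else 0 := by
  intro k
  induction k with
  | zero =>
    intro A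
    rw [Fintype.sum_unique]
    have h1 : (univ : Finset (Fin 0)).image (default : Fin 0 → Fin n) = (∅ : Finset (Fin n)) := by
      simp
    have h2 : Function.Injective (default : Fin 0 → Fin n) :=
      Function.injective_of_subsingleton _
    have h3 : F x y 0 (default : Fin 0 → Fin n) = 1 := Fin.prod_univ_zero _
    rw [h1, h3]
    show w x y 0 A = _
    unfold w
    by_cases hA : A = ∅
    · rw [if_pos hA, if_pos ⟨h2, hA.symm⟩]
    · rw [if_neg hA, if_neg (fun h => hA h.2.symm)]
  | succ k ih =>
    intro A
    classical
    have hbij : Function.Bijective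
        (fun p : (Fin k → Fin n) × Fin n => (Fin.snoc p.1 p.2 : Fin (k+1) → Fin n)) := by
      constructor
      · intro p q h
        have h1 := congrArg Fin.init h
        have h2 := congrArg (fun f : Fin (k+1) → Fin n => f (Fin.last k)) h
        simp only [Fin.init_snoc] at h1
        simp only [Fin.snoc_last] at h2
        exact Prod.ext h1 h2
      · intro f
        exact ⟨(Fin.init f, f (Fin.last k)), Fin.snoc_init_self f⟩
    have hRHS : (∑ f : Fin (k+1) → Fin n,
        if Function.Injective f ∧ univ.image f = A then F x y (k+1) f else 0)
        = ∑ a : Fin n, ∑ g : Fin k → Fin n,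
            if Function.Injective g ∧ (∀ i, g i ≠ a) ∧ insert a (univ.image g) = A then
              gate x y k A * sgn a A * F x y k g else 0 := by
      rw [← Fintype.sum_bijective _ hbij
        (fun p => if Function.Injective (Fin.snoc p.1 p.2 : Fin (k+1) → Fin n)
            ∧ univ.image (Fin.snoc p.1 p.2 : Fin (k+1) → Fin n) = A
          then F x y (k+1) (Fin.snoc p.1 p.2) else 0)
        (fun f => if Function.Injective f ∧ univ.image f = A then F x y (k+1) f else 0)
        (fun p => rfl)]
      rw [Fintype.sum_prod_type, Finset.sum_comm]
      refine Finset.sum_congr rfl fun a _ => Finset.sum_congr rfl fun g _ => ?_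
      dsimp only
      simp only [snoc_injective_iff, image_snoc, F_snoc]
      by_cases h : Function.Injective g ∧ (∀ i, g i ≠ a) ∧ insert a (univ.image g) = A
      · rw [if_pos (show (Function.Injective g ∧ ∀ i, g i ≠ a) ∧
            insert a (univ.image g) = A from ⟨⟨h.1, h.2.1⟩, h.2.2⟩), if_pos h, h.2.2]
        ring
      · rw [if_neg (fun hc => h ⟨hc.1.1, hc.1.2, hc.2⟩), if_neg h]
    rw [hRHS]
    have condEquiv : ∀ (g : Fin k → Fin n) (a : Fin n),
        (Function.Injective g ∧ (∀ i, g i ≠ a) ∧ insert a (univ.image g) = A)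
          ↔ (A.card = k + 1 ∧ a ∈ A ∧ (Function.Injective g ∧ univ.image g = A.erase a)) := by
      intro g a
      constructor
      · rintro ⟨h1, h2, h3⟩
        have hanotin : a ∉ univ.image g := by
          simp only [mem_image, mem_univ, true_and]
          rintro ⟨i, hi⟩
          exact h2 i hi
        refine ⟨?_, ?_, h1, ?_⟩
        · rw [← h3, card_insert_of_notMem hanotin,
            Finset.card_image_of_injective _ h1, Finset.card_fin]
        · rw [← h3]; exact mem_insert_self a _
        · rw [← h3, erase_insert hanotin]
      · rintro ⟨h1, h2, h3, h4⟩
        refine ⟨h3, ?_, ?_⟩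
        · intro i hi
          have : g i ∈ univ.image g := mem_image_of_mem g (mem_univ i)
          rw [h4, hi] at this
          exact (notMem_erase a A) this
        · rw [h4, insert_erase h2]
    have step2 : (∑ a : Fin n, ∑ g : Fin k → Fin n,
        if Function.Injective g ∧ (∀ i, g i ≠ a) ∧ insert a (univ.image g) = A then
          gate x y k A * sgn a A * F x y k g else 0)
        = ∑ a : Fin n, ∑ g : Fin k → Fin n,
          if A.card = k + 1 then (if a ∈ A then
            (if Function.Injective g ∧ univ.image g = A.erase a then
              gate x y k A * sgn a A * F x y k g else 0) else 0) else 0 := by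
      refine Finset.sum_congr rfl fun a _ => Finset.sum_congr rfl fun g _ => ?_
      rw [if_congr (condEquiv g a) rfl rfl, ite_and, ite_and]
    rw [step2]
    simp only [← _root_.ite_sum_zero]
    show _ = (if A.card = k + 1 then
        ∑ a : Fin n, (if a ∈ A then ∑ g : Fin k → Fin n,
          (if Function.Injective g ∧ univ.image g = A.erase a then
            gate x y k A * sgn a A * F x y k g else 0) else 0) else 0)
    rw [Finset.sum_ite_mem, univ_inter]
    show w x y (k+1) A = _
    unfold w
    by_cases hcard : A.card = k + 1
    · rw [if_pos hcard, if_pos hcard, Finset.mul_sum]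
      refine Finset.sum_congr rfl fun a _ => ?_
      rw [ih (A.erase a), Finset.mul_sum, Finset.mul_sum]
      refine Finset.sum_congr rfl fun g _ => ?_
      rw [mul_ite, mul_ite, mul_zero, mul_zero]
      refine if_congr Iff.rfl ?_ rfl
      ring
    · rw [if_neg hcard, if_neg hcard]

lemma sum_eps_eq (ε : Equiv.Perm (Fin n) → ℝ)
    (hε : ∀ σ : Equiv.Perm (Fin n),
      ε σ = if ∃ k : Fin n, (∑ i ∈ Finset.Iic k, x (σ i)) < y k then 0
            else ((Equiv.Perm.sign σ : ℤ) : ℝ)) :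
    (∑ σ : Equiv.Perm (Fin n), ε σ) = w x y n univ := by
  classical
  have heps : ∀ σ : Equiv.Perm (Fin n), ε σ = F x y n ⇑σ := by
    intro σ
    have hgate : ∀ (k : Fin n) (A : Finset (Fin n)),
        gate x y (k : ℕ) A = if (∑ j ∈ A, x j) < y k then 0 else 1 := by
      intro k A
      unfold gate
      rw [dif_pos k.isLt]
    have hsum : ∀ k : Fin n, (∑ j ∈ (Iic k).image σ, x j) = ∑ i ∈ Iic k, x (σ i) :=
      fun k => Finset.sum_image (fun i _ j _ h => σ.injective h)
    rw [hε σ]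
    unfold F
    by_cases h : ∃ k : Fin n, (∑ i ∈ Finset.Iic k, x (σ i)) < y k
    · rw [if_pos h]
      obtain ⟨k, hk⟩ := h
      symm
      refine Finset.prod_eq_zero (mem_univ k) ?_
      rw [hgate, hsum, if_pos hk, zero_mul]
    · rw [if_neg h, sign_eq_prod_sgn]
      push_neg at h
      refine Finset.prod_congr rfl fun k _ => ?_
      rw [hgate, hsum, if_neg (not_lt.mpr (h k)), one_mul]
  simp only [heps]
  rw [L1 x y n univ, ← Finset.sum_filter]
  refine Finset.sum_nbij'
    (fun (σ : Equiv.Perm (Fin n)) => (⇑σ : Fin n → Fin n))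
    (fun f => if h : Function.Bijective f then Equiv.ofBijective f h else 1)
    (fun σ _ => by
      simp only [mem_filter, mem_univ, true_and]
      exact ⟨σ.injective, Finset.image_univ_equiv σ⟩)
    (fun f _ => mem_univ _)
    (fun σ _ => by
      have hb : Function.Bijective ⇑σ := σ.bijective
      simp only [dif_pos hb]
      ext i
      rfl)
    (fun f hf => by
      simp only [mem_filter, mem_univ, true_and] at hf
      have hb : Function.Bijective f := Finite.injective_iff_bijective.mp hf.1
      simp only [dif_pos hb]
      rfl)
    (fun σ _ => rfl)

end Chain

section Estimate

open SumWeightsAux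

variable {n : ℕ} (x y : Fin n → ℝ)

lemma sq_sum_w_le : ∀ k : ℕ, ∑ A : Finset (Fin n), (w x y k A)^2 ≤ (n : ℝ)^k := by
  intro k
  induction k with
  | zero =>
    have hsq : ∀ A : Finset (Fin n), (w x y 0 A)^2 = if A = ∅ then 1 else 0 := by
      intro A
      unfold w
      split_ifs <;> norm_num
    simp only [hsq]
    rw [Finset.sum_ite_eq' univ (∅ : Finset (Fin n)) (fun _ => (1:ℝ))]
    simp
  | succ k ih =>
    have hpt : ∀ A : Finset (Fin n), (w x y (k+1) A)^2
        ≤ (∑ a ∈ A, sgn a A * w x y k (A.erase a))^2 := by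
      intro A
      rw [w_succ]
      split_ifs with h
      · rcases gate_nonneg x y k A with hg | hg
        · rw [hg, zero_mul]
          simpa using sq_nonneg _
        · rw [hg, one_mul]
      · simpa using sq_nonneg _
    have h1 : ∑ A : Finset (Fin n), (w x y (k+1) A)^2
        ≤ ∑ A : Finset (Fin n), (∑ a ∈ A, sgn a A * w x y k (A.erase a))^2 :=
      Finset.sum_le_sum fun A _ => hpt A
    have h2 := key_identity (w x y k)
    have hC : 0 ≤ ∑ B : Finset (Fin n),
        (∑ a ∈ Bᶜ, sgn a (insert a B) * w x y k (insert a B))^2 :=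
      Finset.sum_nonneg fun B _ => sq_nonneg _
    have h3 : ∑ A : Finset (Fin n), (∑ a ∈ A, sgn a A * w x y k (A.erase a))^2
        ≤ (n:ℝ) * ∑ E : Finset (Fin n), (w x y k E)^2 := by linarith
    have h4 : (n:ℝ) * ∑ E : Finset (Fin n), (w x y k E)^2 ≤ (n:ℝ) * (n:ℝ)^k :=
      mul_le_mul_of_nonneg_left ih (Nat.cast_nonneg n)
    calc ∑ A : Finset (Fin n), (w x y (k+1) A)^2
        ≤ (n:ℝ) * (n:ℝ)^k := le_trans h1 (le_trans h3 h4)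
      _ = (n:ℝ)^(k+1) := by rw [pow_succ]; ring

end Estimate

/-- Let `(x_1,…,x_n)` and `(y_1,…,y_n)` be tuples of reals. Give every
permutation `σ` of `{1,…,n}` the weight `ε σ = 0` if some prefix sum
`x_{σ(1)} + ⋯ + x_{σ(k)}` is `< y_k`, and `ε σ = sign σ` otherwise. Then
`∑_σ ε σ ≤ √n ^ n`. -/
theorem sum_of_weights_le_sqrt_pow (n : ℕ) (x y : Fin n → ℝ)
    (ε : Equiv.Perm (Fin n) → ℝ)
    (hε : ∀ σ : Equiv.Perm (Fin n),
      ε σ = if ∃ k : Fin n, (∑ i ∈ Finset.Iic k, x (σ i)) < y k then 0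
            else ((Equiv.Perm.sign σ : ℤ) : ℝ)) :
    (∑ σ : Equiv.Perm (Fin n), ε σ) ≤ Real.sqrt n ^ n := by
  have h1 : (∑ σ : Equiv.Perm (Fin n), ε σ) = SumWeightsAux.w x y n univ := sum_eps_eq x y ε hε
  have h2 : (SumWeightsAux.w x y n univ)^2 ≤ (n : ℝ)^n := by
    refine le_trans ?_ (sq_sum_w_le x y n)
    exact Finset.single_le_sum (f := fun A => (SumWeightsAux.w x y n A)^2)
      (fun A _ => sq_nonneg _) (mem_univ _)
  have h3 : Real.sqrt ((n : ℝ)^n) = Real.sqrt n ^ n := by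
    have : ((n : ℝ)^n) = (Real.sqrt n ^ n)^2 := by
      rw [← pow_mul, mul_comm, pow_mul, Real.sq_sqrt (Nat.cast_nonneg n)]
    rw [this, Real.sqrt_sq (by positivity)]
  calc (∑ σ : Equiv.Perm (Fin n), ε σ) = SumWeightsAux.w x y n univ := h1
    _ ≤ |SumWeightsAux.w x y n univ| := le_abs_self _
    _ = Real.sqrt ((SumWeightsAux.w x y n univ)^2) := (Real.sqrt_sq_eq_abs _).symm
    _ ≤ Real.sqrt ((n : ℝ)^n) := Real.sqrt_le_sqrt h2
    _ = Real.sqrt n ^ n := h3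
end

section
/- Fix a natural number $n \geq 1$, set $N = \{1,\ldots,n\}$, and let $f : \mathcal{P}(N) \to [-1,1]$ be any function. Define $g : \mathcal{P}(N) \to \mathbb{R}$ by $g(T) = \sum_{\sigma \in S_k} \mathrm{sign}(\sigma) \prod_{i=1}^{k} f(\{t_{\sigma(1)},\ldots,t_{\sigma(i)}\})$ for $T = \{t_1 < \cdots < t_k\}$ (so $g(\emptyset) = 1$). Let $V = \bigoplus_{k=0}^{n} \bigwedge^k \mathbb{R}^n$ with the inner product making $\{\delta_S : S \subseteq N\}$ orthonormal, where $\delta_S = e_{s_1} \wedge \cdots \wedge e_{s_k}$ for $S = \{s_1 < \cdots < s_k\}$. For $0 \le k \le n$, identify $g$ restricted to $k$-element subsets with the element $g|_{G_k} = \sum_{|S| = k} g(S)\,\delta_S \in \bigwedge^k \mathbb{R}^n$. Let $P \in \mathrm{End}(V)$ satisfy $P(\delta_S) = f(S)\,\delta_S$, let $\alpha = \frac{1}{\sqrt{n}}(\delta_{\{1\}} + \cdots + \delta_{\{n\}})$, and let $R \in \mathrm{End}(V)$ be $\varphi \mapsto \varphi \wedge \alpha$. Then for every $1 \le k \le n$,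 $g|_{G_k} = \sqrt{n}\, P(R(g|_{G_{k-1}}))$. -/
open ExteriorAlgebra

variable {M : Type*} [AddCommGroup M] [Module ℝ M]

theorem prod_mul_iota (x : M) (l : List M) :
    (l.map (ι ℝ)).prod * ι ℝ x = ((-1:ℝ)^l.length) • (ι ℝ x * (l.map (ι ℝ)).prod) := by
  induction l with
  | nil => simp
  | cons a l ih =>
    have h : ι ℝ a * ι ℝ x = -(ι ℝ x * ι ℝ a) :=
      eq_neg_of_add_eq_zero_left (ExteriorAlgebra.ι_add_mul_swap a x)
    simp only [List.map_cons, List.prod_cons, List.length_cons, mul_assoc, ih, pow_succ]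
    rw [mul_smul_comm, ← mul_assoc, h, neg_mul, smul_neg, ← neg_smul, mul_assoc]
    ring_nf

theorem filter_not_lt {n : ℕ} (T : Finset (Fin n)) (i : Fin n) (hi : i ∉ T) :
    T.filter (fun t => i < t) = T.filter (fun t => ¬ t < i) := by
  apply Finset.filter_congr
  intro t ht
  have hne : t ≠ i := fun h => hi (h ▸ ht)
  constructor
  · exact fun h => not_lt.2 h.le
  · intro h; exact lt_of_le_of_ne (not_lt.1 h) (Ne.symm hne)

theorem val_split {n : ℕ} (T : Finset (Fin n)) (i : Fin n) (hi : i ∉ T) :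
    T.val = (T.filter (fun t => t < i)).val + (T.filter (fun t => i < t)).val := by
  rw [filter_not_lt T i hi, Finset.filter_val, Finset.filter_val, Multiset.filter_add_not]

theorem sort_split {n : ℕ} (T : Finset (Fin n)) (i : Fin n) (hi : i ∉ T) :
    T.sort (· ≤ ·) =
      (T.filter (fun t => t < i)).sort (· ≤ ·) ++ (T.filter (fun t => i < t)).sort (· ≤ ·) := by
  apply List.Perm.eq_of_pairwise' (Finset.pairwise_sort _ _)
  · apply List.pairwise_append.2
    refine ⟨Finset.pairwise_sort _ _, Finset.pairwise_sort _ _, ?_⟩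
    intro a ha b hb
    rw [Finset.mem_sort] at ha hb
    exact le_of_lt (lt_trans (Finset.mem_filter.1 ha).2 (Finset.mem_filter.1 hb).2)
  · rw [← Multiset.coe_eq_coe]
    rw [← Multiset.coe_add, Finset.sort_eq, Finset.sort_eq, Finset.sort_eq]
    exact val_split T i hi

theorem sort_insert_split {n : ℕ} (T : Finset (Fin n)) (i : Fin n) (hi : i ∉ T) :
    (insert i T).sort (· ≤ ·) =
      (T.filter (fun t => t < i)).sort (· ≤ ·) ++
        i :: (T.filter (fun t => i < t)).sort (· ≤ ·) := by
  apply List.Perm.eq_of_pairwise' (Finset.pairwise_sort _ _)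
  · apply List.pairwise_append.2
    refine ⟨Finset.pairwise_sort _ _, ?_, ?_⟩
    · apply List.pairwise_cons.2
      refine ⟨?_, Finset.pairwise_sort _ _⟩
      intro b hb
      rw [Finset.mem_sort] at hb
      exact le_of_lt (Finset.mem_filter.1 hb).2
    · intro a ha b hb
      rw [Finset.mem_sort] at ha
      have ha' := (Finset.mem_filter.1 ha).2
      rcases List.mem_cons.1 hb with rfl | hb
      · exact le_of_lt ha'
      · rw [Finset.mem_sort] at hb
        exact le_of_lt (lt_trans ha' (Finset.mem_filter.1 hb).2)
  · rw [← Multiset.coe_eq_coe]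
    rw [← Multiset.coe_add, Finset.sort_eq, ← Multiset.cons_coe, Finset.sort_eq,
      Finset.sort_eq, Finset.insert_val_of_notMem hi, val_split T i hi]
    simp [Multiset.add_cons]

/-- `δ S = e_{s_1} ∧ ⋯ ∧ e_{s_k}` for `S = {s_1 < ⋯ < s_k} ⊆ {1,…,n}`, viewed inside the
exterior algebra `V = ⨁_k ⋀^k ℝⁿ` of `ℝⁿ` (with `e_1,…,e_n` the canonical basis). -/
noncomputable def deltaWedge (n : ℕ) (S : Finset (Fin n)) :
    ExteriorAlgebra ℝ (EuclideanSpace ℝ (Fin n)) :=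
  ((S.sort (· ≤ ·)).map fun i =>
    ExteriorAlgebra.ι ℝ (EuclideanSpace.single i (1 : ℝ))).prod

theorem deltaWedge_mul_of_not_mem {n : ℕ} (T : Finset (Fin n)) (i : Fin n) (hi : i ∉ T) :
    deltaWedge n T * ι ℝ (EuclideanSpace.single i (1:ℝ)) =
      ((-1:ℝ) ^ ((T.filter (fun t => i < t)).card)) • deltaWedge n (insert i T) := by
  have key := prod_mul_iota (EuclideanSpace.single i (1:ℝ))
    (((T.filter (fun t => i < t)).sort (· ≤ ·)).map
      (fun j => EuclideanSpace.single j (1:ℝ)))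
  simp only [List.map_map, Function.comp_def, List.length_map, Finset.length_sort] at key
  rw [deltaWedge, deltaWedge, sort_split T i hi, sort_insert_split T i hi]
  simp only [List.map_append, List.prod_append, List.map_cons, List.prod_cons]
  rw [mul_assoc, key, mul_smul_comm]

theorem deltaWedge_mul_of_mem {n : ℕ} (T : Finset (Fin n)) (i : Fin n) (hi : i ∈ T) :
    deltaWedge n T * ι ℝ (EuclideanSpace.single i (1:ℝ)) = 0 := by
  set T' := T.erase i with hT'
  have hi' : i ∉ T' := Finset.notMem_erase i T
  have hT : T = insert i T' := by rw [hT', Finset.insert_erase hi]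
  have key := prod_mul_iota (EuclideanSpace.single i (1:ℝ))
    (((T'.filter (fun t => i < t)).sort (· ≤ ·)).map
      (fun j => EuclideanSpace.single j (1:ℝ)))
  simp only [List.map_map, Function.comp_def, List.length_map, Finset.length_sort] at key
  rw [hT, deltaWedge, sort_insert_split T' i hi']
  simp only [List.map_append, List.prod_append, List.map_cons, List.prod_cons]
  rw [mul_assoc, mul_assoc, key, mul_smul_comm, mul_smul_comm,
    ← mul_assoc (ι ℝ (EuclideanSpace.single i (1:ℝ))), ExteriorAlgebra.ι_sq_zero,
    zero_mul, mul_zero, smul_zero]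

open Equiv Equiv.Perm Finset in
theorem image_rev_Iic {k : ℕ} (i : Fin k) :
    (Finset.Iic i).image Fin.rev = Finset.Ici i.rev := by
  ext x
  simp only [Finset.mem_image, Finset.mem_Iic, Finset.mem_Ici]
  constructor
  · rintro ⟨y, hy, rfl⟩
    exact Fin.rev_le_rev.2 hy
  · intro h
    refine ⟨x.rev, ?_, Fin.rev_rev x⟩
    rw [← Fin.rev_rev i]  -- i = rev (rev i)
    exact Fin.rev_le_rev.2 h

noncomputable def gIic {n : ℕ} (f : Finset (Fin n) → ℝ) (k : ℕ) (T : Finset (Fin n))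
    (h : T.card = k) : ℝ :=
  ∑ σ : Equiv.Perm (Fin k), ((Equiv.Perm.sign σ : ℤ) : ℝ) *
    ∏ i : Fin k, f ((Finset.Iic i).image fun j => T.orderEmbOfFin h (σ j))

noncomputable def GIci {n : ℕ} (f : Finset (Fin n) → ℝ) (k : ℕ) (T : Finset (Fin n))
    (h : T.card = k) : ℝ :=
  ∑ σ : Equiv.Perm (Fin k), ((Equiv.Perm.sign σ : ℤ) : ℝ) *
    ∏ i : Fin k, f ((Finset.Ici i).image fun j => T.orderEmbOfFin h (σ j))

theorem gIic_eq_sign_rev_mul {n : ℕ} (f : Finset (Fin n) → ℝ) (k : ℕ) (T : Finset (Fin n))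
    (h : T.card = k) :
    gIic f k T h =
      ((Equiv.Perm.sign (Fin.revPerm : Equiv.Perm (Fin k)) : ℤ) : ℝ) * GIci f k T h := by
  rw [gIic, GIci, Finset.mul_sum]
  rw [← Equiv.sum_comp (Equiv.mulRight (Fin.revPerm : Equiv.Perm (Fin k)))
    (fun σ : Equiv.Perm (Fin k) => ((Equiv.Perm.sign σ : ℤ) : ℝ) *
      ∏ i : Fin k, f ((Finset.Iic i).image fun j => T.orderEmbOfFin h (σ j)))]
  apply Finset.sum_congr rfl
  intro σ _
  have hsign : ((Equiv.Perm.sign (σ * Fin.revPerm) : ℤ) : ℝ) =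
      ((Equiv.Perm.sign (Fin.revPerm : Equiv.Perm (Fin k)) : ℤ) : ℝ) *
        ((Equiv.Perm.sign σ : ℤ) : ℝ) := by
    rw [map_mul]; push_cast; ring
  simp only [Equiv.coe_mulRight, Equiv.Perm.mul_apply, hsign]
  rw [mul_assoc]
  congr 1
  congr 1
  rw [← Equiv.prod_comp (Fin.revPerm : Equiv.Perm (Fin k))
    (fun i : Fin k => f ((Finset.Ici i).image fun j => T.orderEmbOfFin h (σ j)))]
  apply Finset.prod_congr rfl
  intro i _
  congr 1
  have : (Finset.Iic i).image (fun j => T.orderEmbOfFin h (σ (Fin.revPerm j)))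
      = ((Finset.Iic i).image Fin.rev).image (fun j => T.orderEmbOfFin h (σ j)) := by
    rw [Finset.image_image]; rfl
  rw [this, image_rev_Iic]
  rfl

open Equiv Equiv.Perm in
noncomputable def succExt {m : ℕ} (τ : Equiv.Perm (Fin m)) : Equiv.Perm (Fin (m+1)) :=
  Equiv.Perm.decomposeFin.symm (0, τ)

@[simp] theorem succExt_zero {m : ℕ} (τ : Equiv.Perm (Fin m)) : succExt τ 0 = 0 :=
  Equiv.Perm.decomposeFin_symm_apply_zero 0 τ

@[simp] theorem succExt_succ {m : ℕ} (τ : Equiv.Perm (Fin m)) (i : Fin m) :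
    succExt τ i.succ = (τ i).succ := by
  rw [succExt, Equiv.Perm.decomposeFin_symm_apply_succ, Equiv.swap_self, Equiv.refl_apply]

@[simp] theorem sign_succExt {m : ℕ} (τ : Equiv.Perm (Fin m)) :
    Equiv.Perm.sign (succExt τ) = Equiv.Perm.sign τ := by
  rw [succExt, Equiv.Perm.decomposeFin.symm_sign, if_pos rfl, one_mul]

noncomputable def permE {m : ℕ} (p : Fin (m+1) × Equiv.Perm (Fin m)) :
    Equiv.Perm (Fin (m+1)) :=
  (Fin.cycleRange p.1)⁻¹ * succExt p.2

@[simp] theorem permE_zero {m : ℕ} (p : Fin (m+1) × Equiv.Perm (Fin m)) :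
    permE p 0 = p.1 := by
  rw [permE, Equiv.Perm.mul_apply, succExt_zero]
  exact Fin.cycleRange_symm_zero p.1

@[simp] theorem permE_succ {m : ℕ} (p : Fin (m+1) × Equiv.Perm (Fin m)) (i : Fin m) :
    permE p i.succ = p.1.succAbove (p.2 i) := by
  rw [permE, Equiv.Perm.mul_apply, succExt_succ]
  exact Fin.cycleRange_symm_succ p.1 (p.2 i)

theorem sign_permE {m : ℕ} (p : Fin (m+1) × Equiv.Perm (Fin m)) :
    ((Equiv.Perm.sign (permE p) : ℤ) : ℝ) =
      (-1 : ℝ) ^ (p.1 : ℕ) * ((Equiv.Perm.sign p.2 : ℤ) : ℝ) := by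
  rw [permE, map_mul, map_inv, Fin.sign_cycleRange, sign_succExt]
  rw [← inv_pow, inv_neg, inv_one]
  push_cast
  ring

theorem permE_bijective {m : ℕ} : Function.Bijective (permE (m := m)) := by
  rw [Fintype.bijective_iff_injective_and_card]
  constructor
  · intro p q hpq
    have h1 : p.1 = q.1 := by
      have := congrArg (fun σ : Equiv.Perm (Fin (m+1)) => σ 0) hpq
      simpa using this
    have h2 : succExt p.2 = succExt q.2 := by
      rw [permE, permE, h1] at hpq
      exact mul_left_cancel hpq
    have h3 : p.2 = q.2 := by
      have := Equiv.Perm.decomposeFin.symm.injective (a₁ := (0, p.2)) (a₂ := (0, q.2)) h2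
      exact (Prod.ext_iff.1 this).2
    exact Prod.ext h1 h3
  · rw [Fintype.card_prod, Fintype.card_perm, Fintype.card_perm, Fintype.card_fin,
      Fintype.card_fin, Nat.factorial_succ]

theorem image_univ_orderEmbOfFin {n k : ℕ} (T : Finset (Fin n)) (h : T.card = k) :
    Finset.univ.image (T.orderEmbOfFin h) = T := by
  apply Finset.coe_injective
  rw [Finset.coe_image, Finset.coe_univ, Set.image_univ, Finset.range_orderEmbOfFin]

theorem image_univ_perm_orderEmbOfFin {n k : ℕ} (T : Finset (Fin n)) (h : T.card = k)
    (σ : Equiv.Perm (Fin k)) :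
    (Finset.univ.image fun j => T.orderEmbOfFin h (σ j)) = T := by
  have : (Finset.univ.image fun j => T.orderEmbOfFin h (σ j))
      = (Finset.univ.image σ).image (T.orderEmbOfFin h) := by
    rw [Finset.image_image]; rfl
  rw [this, Finset.image_univ_equiv, image_univ_orderEmbOfFin]

theorem Ici_zero_fin {k : ℕ} : Finset.Ici (0 : Fin (k+1)) = Finset.univ := by
  ext x; simp [Fin.zero_le]

theorem Ici_succ_eq_image {k : ℕ} (i : Fin k) :
    Finset.Ici i.succ = (Finset.Ici i).image Fin.succ := by
  ext x
  simp only [Finset.mem_Ici, Finset.mem_image]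
  constructor
  · intro hx
    refine Fin.cases ?_ ?_ x hx
    · intro h0
      exact absurd h0 (by simp [Fin.le_def])
    · intro y hy
      exact ⟨y, Fin.succ_le_succ_iff.1 hy, rfl⟩
  · rintro ⟨y, hy, rfl⟩
    exact Fin.succ_le_succ_iff.2 hy

theorem orderEmbOfFin_erase {n m : ℕ} (T : Finset (Fin n)) (h : T.card = m+1)
    (j : Fin (m+1)) (h' : (T.erase (T.orderEmbOfFin h j)).card = m) (x : Fin m) :
    (T.erase (T.orderEmbOfFin h j)).orderEmbOfFin h' x
      = T.orderEmbOfFin h (j.succAbove x) := by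
  have hu := Finset.orderEmbOfFin_unique h'
    (f := fun x : Fin m => T.orderEmbOfFin h (j.succAbove x)) ?_ ?_
  · exact (congrFun hu x).symm
  · intro y
    rw [Finset.mem_erase]
    refine ⟨?_, Finset.orderEmbOfFin_mem T h _⟩
    intro hc
    exact Fin.succAbove_ne j y ((T.orderEmbOfFin h).injective hc)
  · exact (T.orderEmbOfFin h).strictMono.comp (Fin.strictMono_succAbove j)

theorem GIci_succ {n m : ℕ} (f : Finset (Fin n) → ℝ) (T : Finset (Fin n)) (h : T.card = m+1)
    (h' : ∀ j : Fin (m+1), (T.erase (T.orderEmbOfFin h j)).card = m) :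
    GIci f (m+1) T h =
      f T * ∑ j : Fin (m+1), (-1:ℝ)^(j:ℕ) *
        GIci f m (T.erase (T.orderEmbOfFin h j)) (h' j) := by
  rw [GIci, ← Function.Bijective.sum_comp (permE_bijective (m := m))
    (fun σ => ((Equiv.Perm.sign σ : ℤ) : ℝ) *
      ∏ i : Fin (m+1), f ((Finset.Ici i).image fun j => T.orderEmbOfFin h (σ j)))]
  rw [Fintype.sum_prod_type, Finset.mul_sum]
  apply Finset.sum_congr rfl
  intro j _
  rw [GIci, Finset.mul_sum, Finset.mul_sum]
  apply Finset.sum_congr rfl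
  intro τ _
  have hprod : (∏ i : Fin (m+1),
      f ((Finset.Ici i).image fun x => T.orderEmbOfFin h (permE (j, τ) x)))
      = f T * ∏ i : Fin m,
          f ((Finset.Ici i).image fun x =>
            (T.erase (T.orderEmbOfFin h j)).orderEmbOfFin (h' j) (τ x)) := by
    rw [Fin.prod_univ_succ]
    congr 1
    · rw [Ici_zero_fin]
      congr 1
      have : (Finset.univ.image fun x => T.orderEmbOfFin h (permE (j, τ) x)) = T :=
        image_univ_perm_orderEmbOfFin T h (permE (j, τ))
      exact this
    · apply Finset.prod_congr rfl
      intro i _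
      congr 1
      rw [Ici_succ_eq_image, Finset.image_image]
      apply Finset.image_congr
      intro x _
      simp only [Function.comp]
      rw [permE_succ (j, τ) x]
      exact (orderEmbOfFin_erase T h j (h' j) (τ x)).symm
  rw [hprod, sign_permE]
  ring

theorem rev_eq_permE {m : ℕ} :
    (Fin.revPerm : Equiv.Perm (Fin (m+1)))
      = permE (Fin.last m, (Fin.revPerm : Equiv.Perm (Fin m))) := by
  apply Equiv.ext
  intro x
  refine Fin.cases ?_ ?_ x
  · rw [permE_zero]
    exact Fin.rev_zero m ▸ rfl
  · intro y
    rw [permE_succ]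
    show (y.succ).rev = (Fin.last m).succAbove y.rev
    rw [Fin.rev_succ, Fin.succAbove_last]

theorem sign_cast_sq {k : ℕ} (σ : Equiv.Perm (Fin k)) :
    ((Equiv.Perm.sign σ : ℤ) : ℝ) * ((Equiv.Perm.sign σ : ℤ) : ℝ) = 1 := by
  rcases Int.units_eq_one_or (Equiv.Perm.sign σ) with h | h <;> rw [h] <;> norm_num

theorem sign_rev_succ (m : ℕ) :
    ((Equiv.Perm.sign (Fin.revPerm : Equiv.Perm (Fin (m+1))) : ℤ) : ℝ)
      = (-1:ℝ)^m * ((Equiv.Perm.sign (Fin.revPerm : Equiv.Perm (Fin m)) : ℤ) : ℝ) := by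
  rw [rev_eq_permE, sign_permE]
  norm_num

theorem GIci_eq_sign_rev_mul {n : ℕ} (f : Finset (Fin n) → ℝ) (k : ℕ) (T : Finset (Fin n))
    (h : T.card = k) :
    GIci f k T h =
      ((Equiv.Perm.sign (Fin.revPerm : Equiv.Perm (Fin k)) : ℤ) : ℝ) * gIic f k T h := by
  rw [gIic_eq_sign_rev_mul, ← mul_assoc, sign_cast_sq, one_mul]

theorem gIic_congr {n : ℕ} (f : Finset (Fin n) → ℝ) (T : Finset (Fin n)) (k : ℕ)
    (h : T.card = k) : gIic f T.card T rfl = gIic f k T h := by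
  subst h; rfl

theorem filter_lt_card {n m : ℕ} (S : Finset (Fin n)) (h : S.card = m+1) (x : Fin (m+1)) :
    (S.filter (fun t => S.orderEmbOfFin h x < t)).card = m - x := by
  have himg := image_univ_orderEmbOfFin S h
  have : S.filter (fun t => S.orderEmbOfFin h x < t)
      = (Finset.Ioi x).image (S.orderEmbOfFin h) := by
    ext t
    simp only [Finset.mem_filter, Finset.mem_image, Finset.mem_Ioi]
    constructor
    · rintro ⟨ht, hlt⟩
      rw [← himg] at ht
      obtain ⟨y, -, rfl⟩ := Finset.mem_image.1 ht
      exact ⟨y, (OrderEmbedding.lt_iff_lt _).1 hlt, rfl⟩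
    · rintro ⟨y, hy, rfl⟩
      exact ⟨Finset.orderEmbOfFin_mem S h y, (OrderEmbedding.lt_iff_lt _).2 hy⟩
  rw [this, Finset.card_image_of_injective _ (S.orderEmbOfFin h).injective, Fin.card_Ioi]
  omega

theorem sum_via_orderEmbOfFin {n m : ℕ} (S : Finset (Fin n)) (h : S.card = m+1)
    (F : Fin n → ℝ) :
    ∑ j ∈ S, F j = ∑ x : Fin (m+1), F (S.orderEmbOfFin h x) := by
  conv_lhs => rw [← image_univ_orderEmbOfFin S h]
  rw [Finset.sum_image (fun x _ y _ hxy => (S.orderEmbOfFin h).injective hxy)]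

theorem g_rec {n m : ℕ} (f g : Finset (Fin n) → ℝ)
    (hg : ∀ T : Finset (Fin n), g T = gIic f T.card T rfl)
    (S : Finset (Fin n)) (h : S.card = m+1) :
    g S = f S * ∑ j ∈ S, (-1:ℝ)^((S.filter (fun t => j < t)).card) * g (S.erase j) := by
  have h' : ∀ j : Fin (m+1), (S.erase (S.orderEmbOfFin h j)).card = m := by
    intro j
    rw [Finset.card_erase_of_mem (Finset.orderEmbOfFin_mem S h j), h]
    omega
  have step1 : g S = ((Equiv.Perm.sign (Fin.revPerm : Equiv.Perm (Fin (m+1))) : ℤ) : ℝ) *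
      GIci f (m+1) S h := by
    rw [hg S, gIic_congr f S (m+1) h, gIic_eq_sign_rev_mul]
  rw [step1, GIci_succ f S h h']
  have step2 : ∀ j : Fin (m+1),
      GIci f m (S.erase (S.orderEmbOfFin h j)) (h' j) =
        ((Equiv.Perm.sign (Fin.revPerm : Equiv.Perm (Fin m)) : ℤ) : ℝ) *
          g (S.erase (S.orderEmbOfFin h j)) := by
    intro j
    rw [GIci_eq_sign_rev_mul, hg (S.erase (S.orderEmbOfFin h j)),
      gIic_congr f _ m (h' j)]
  rw [sum_via_orderEmbOfFin S h
    (fun j => (-1:ℝ)^((S.filter (fun t => j < t)).card) * g (S.erase j))]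
  rw [sign_rev_succ m, Finset.mul_sum, Finset.mul_sum, Finset.mul_sum]
  apply Finset.sum_congr rfl
  intro x _
  rw [step2 x, filter_lt_card S h x]
  have hx : (x : ℕ) ≤ m := Nat.lt_succ_iff.1 x.isLt
  have hpow : (-1:ℝ)^(m - (x:ℕ)) = (-1:ℝ)^m * (-1:ℝ)^(x:ℕ) := by
    rw [← pow_add]
    have hmx : m + (x:ℕ) = (m - x) + 2 * x := by omega
    rw [hmx, pow_add, pow_mul, neg_one_sq, one_pow, mul_one]
  rw [hpow]
  linear_combination (f S * g (S.erase (S.orderEmbOfFin h x)) * ((-1:ℝ)^m * (-1:ℝ)^(x:ℕ))) *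
    (sign_cast_sq (Fin.revPerm : Equiv.Perm (Fin m)))

theorem erase_filter_lt {n : ℕ} (S : Finset (Fin n)) (j : Fin n) :
    (S.erase j).filter (fun t => j < t) = S.filter (fun t => j < t) := by
  ext t
  simp only [Finset.mem_filter, Finset.mem_erase]
  constructor
  · rintro ⟨⟨-, ht⟩, hlt⟩; exact ⟨ht, hlt⟩
  · rintro ⟨ht, hlt⟩; exact ⟨⟨ne_of_gt hlt, ht⟩, hlt⟩

/-- With `f : 𝒫({1,…,n}) → [-1,1]`, `g` defined from `f` by the signed sum
over permutations, `P (δ S) = f S • δ S`, `α = (1/√n)(δ{1} + ⋯ + δ{n})`, `R : φ ↦ φ ∧ α`,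
and `g|_{G_k} = ∑_{|S| = k} g S • δ S ∈ ⋀^k ℝⁿ ⊆ V`, one has
`g|_{G_k} = √n • P (R (g|_{G_{k-1}}))` for all `1 ≤ k ≤ n`. -/
theorem g_restrict_eq_sqrt_smul_P_R (n : ℕ) (hn : 1 ≤ n)
    (f : Finset (Fin n) → ℝ) (hf : ∀ S : Finset (Fin n), f S ∈ Set.Icc (-1 : ℝ) 1)
    (g : Finset (Fin n) → ℝ)
    (hg : ∀ T : Finset (Fin n),
      g T = ∑ σ : Equiv.Perm (Fin T.card),
        ((Equiv.Perm.sign σ : ℤ) : ℝ) *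
          ∏ i : Fin T.card,
            f ((Finset.Iic i).image fun j => T.orderEmbOfFin rfl (σ j)))
    (P R : ExteriorAlgebra ℝ (EuclideanSpace ℝ (Fin n)) →ₗ[ℝ]
           ExteriorAlgebra ℝ (EuclideanSpace ℝ (Fin n)))
    (hP : ∀ S : Finset (Fin n), P (deltaWedge n S) = f S • deltaWedge n S)
    (hR : ∀ φ : ExteriorAlgebra ℝ (EuclideanSpace ℝ (Fin n)),
      R φ = φ * ExteriorAlgebra.ι ℝ
        ((Real.sqrt n)⁻¹ • ∑ i : Fin n, EuclideanSpace.single i (1 : ℝ))) :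
    ∀ k : ℕ, 1 ≤ k → k ≤ n →
      (∑ S ∈ Finset.univ.filter fun S : Finset (Fin n) => S.card = k,
          g S • deltaWedge n S)
        = Real.sqrt n •
          P (R (∑ S ∈ Finset.univ.filter fun S : Finset (Fin n) => S.card = k - 1,
            g S • deltaWedge n S)) := by
  intro k hk1 hkn
  obtain ⟨m, rfl⟩ : ∃ m, k = m + 1 := ⟨k - 1, by omega⟩
  have hkm : m + 1 - 1 = m := rfl
  rw [hkm]
  have hg' : ∀ T : Finset (Fin n), g T = gIic f T.card T rfl := fun T => hg T
  have hsqrt : Real.sqrt n ≠ 0 := by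
    refine ne_of_gt (Real.sqrt_pos.2 ?_)
    exact_mod_cast Nat.lt_of_lt_of_le Nat.zero_lt_one hn
  set X : ExteriorAlgebra ℝ (EuclideanSpace ℝ (Fin n)) :=
    ∑ p ∈ (Finset.univ.filter fun T : Finset (Fin n) => T.card = m).sigma
        (fun T => Finset.univ.filter fun i => i ∉ T),
      (g p.1 * ((-1:ℝ)^((p.1.filter (fun t => p.2 < t)).card) * f (insert p.2 p.1))) •
        deltaWedge n (insert p.2 p.1) with hX
  trans X
  · -- LHS = X
    have hL : ∀ S ∈ (Finset.univ.filter fun S : Finset (Fin n) => S.card = m + 1),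
        g S • deltaWedge n S =
          ∑ j ∈ S, (g (S.erase j) *
            ((-1:ℝ)^((S.filter (fun t => j < t)).card) * f S)) • deltaWedge n S := by
      intro S hS
      have hcard : S.card = m + 1 := (Finset.mem_filter.1 hS).2
      rw [g_rec f g hg' S hcard, Finset.mul_sum, Finset.sum_smul]
      apply Finset.sum_congr rfl
      intro j _
      congr 1
      ring
    rw [Finset.sum_congr rfl hL, Finset.sum_sigma']
    refine Finset.sum_nbij' (i := fun p => ⟨p.1.erase p.2, p.2⟩)
      (j := fun p => ⟨insert p.2 p.1, p.2⟩) ?_ ?_ ?_ ?_ ?_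
    · rintro ⟨S, j⟩ hp
      simp only [Finset.mem_sigma, Finset.mem_filter, Finset.mem_univ, true_and] at hp ⊢
      obtain ⟨hS, hj⟩ := hp
      exact ⟨by rw [Finset.card_erase_of_mem hj, hS]; omega, Finset.notMem_erase j S⟩
    · rintro ⟨T, i⟩ hp
      simp only [Finset.mem_sigma, Finset.mem_filter, Finset.mem_univ, true_and] at hp ⊢
      obtain ⟨hT, hi⟩ := hp
      exact ⟨by rw [Finset.card_insert_of_notMem hi, hT], Finset.mem_insert_self i T⟩
    · rintro ⟨S, j⟩ hp
      simp only [Finset.mem_sigma, Finset.mem_filter, Finset.mem_univ, true_and] at hp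
      simp only [Sigma.mk.inj_iff, heq_eq_eq, and_true]
      exact Finset.insert_erase hp.2
    · rintro ⟨T, i⟩ hp
      simp only [Finset.mem_sigma, Finset.mem_filter, Finset.mem_univ, true_and] at hp
      simp only [Sigma.mk.inj_iff, heq_eq_eq, and_true]
      exact Finset.erase_insert hp.2
    · rintro ⟨S, j⟩ hp
      simp only [Finset.mem_sigma, Finset.mem_filter, Finset.mem_univ, true_and] at hp
      simp only []
      rw [Finset.insert_erase hp.2, erase_filter_lt]
  · -- X = RHS
    rw [hR, map_smul, map_sum, mul_smul_comm, map_smul, smul_smul,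
      mul_inv_cancel₀ hsqrt, one_smul, Finset.mul_sum, map_sum]
    have hterm : ∀ (i : Fin n),
        P ((∑ T ∈ Finset.univ.filter fun T : Finset (Fin n) => T.card = m,
            g T • deltaWedge n T) * ExteriorAlgebra.ι ℝ (EuclideanSpace.single i (1:ℝ)))
          = ∑ T ∈ Finset.univ.filter fun T : Finset (Fin n) => T.card = m,
              (if i ∉ T then
                (g T * ((-1:ℝ)^((T.filter (fun t => i < t)).card) * f (insert i T))) •
                  deltaWedge n (insert i T)
               else 0) := by
      intro i
      rw [Finset.sum_mul, map_sum]
      apply Finset.sum_congr rfl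
      intro T _
      rw [smul_mul_assoc, map_smul]
      by_cases hi : i ∈ T
      · rw [deltaWedge_mul_of_mem T i hi, map_zero, smul_zero, if_neg (not_not.2 hi)]
      · rw [deltaWedge_mul_of_not_mem T i hi, map_smul, hP, if_pos hi,
          smul_smul, smul_smul, mul_assoc]
    rw [Finset.sum_congr rfl fun i _ => hterm i, Finset.sum_comm, hX,
      Finset.sum_sigma]
    apply Finset.sum_congr rfl
    intro T hT
    rw [Finset.sum_filter]
end

section
/- Fix a natural number $n \geq 1$, set $N = \{1,\ldots,n\}$, and let $f : \mathcal{P}(N) \to [-1,1]$ be any function. Define $g : \mathcal{P}(N) \to \mathbb{R}$ by $g(T) = \sum_{\sigma \in S_k} \mathrm{sign}(\sigma) \prod_{i=1}^{k} f(\{t_{\sigma(1)},\ldots,t_{\sigma(i)}\})$ for $T = \{t_1 < \cdots < t_k\}$ (so $g(\emptyset) = 1$). Let $V = \bigoplus_{k=0}^{n} \bigwedge^k \mathbb{R}^n$ with the inner product making $\{\delta_S : S \subseteq N\}$ orthonormal, where $\delta_S = e_{s_1} \wedge \cdots \wedge e_{s_k}$ for $S = \{s_1 < \cdots < s_k\}$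 and $e_1,\ldots,e_n$ the canonical basis of $\mathbb{R}^n$. Let $P \in \mathrm{End}(V)$ satisfy $P(\delta_S) = f(S)\,\delta_S$, let $\alpha = \frac{1}{\sqrt{n}}(\delta_{\{1\}} + \cdots + \delta_{\{n\}})$, and let $R \in \mathrm{End}(V)$ be $\varphi \mapsto \varphi \wedge \alpha$. Then $g(N)\,\delta_N = \sqrt{n}^{\,n}\,(P \circ R)^n(\delta_\emptyset)$. -/
set_option maxHeartbeats 1000000

noncomputable def wter (n k : ℕ) (w : Fin k → Fin n) :
    ExteriorAlgebra ℝ (EuclideanSpace ℝ (Fin n)) :=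
  ExteriorAlgebra.ιMulti ℝ k (fun i => EuclideanSpace.single (w i) (1 : ℝ))

lemma wter_eq_prod (n k : ℕ) (w : Fin k → Fin n) :
    wter n k w
      = (List.ofFn fun i => ExteriorAlgebra.ι ℝ
          (EuclideanSpace.single (w i) (1 : ℝ))).prod :=
  ExteriorAlgebra.ιMulti_apply _

lemma wter_zero {n k : ℕ} {w : Fin k → Fin n} (hw : ¬ Function.Injective w) :
    wter n k w = 0 := by
  apply AlternatingMap.map_eq_zero_of_not_injective
  intro hinj
  apply hw
  intro a b hab
  apply hinj
  simp only [hab]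

lemma wter_comp_perm {n k : ℕ} (w : Fin k → Fin n) (σ : Equiv.Perm (Fin k)) :
    wter n k (w ∘ σ) = ((Equiv.Perm.sign σ : ℤ) : ℝ) • wter n k w := by
  have h := AlternatingMap.map_perm
    (ExteriorAlgebra.ιMulti ℝ k (M := EuclideanSpace ℝ (Fin n)))
    (fun i => EuclideanSpace.single (w i) (1 : ℝ)) σ
  have h2 : ((fun i => EuclideanSpace.single (w i) (1 : ℝ)) ∘ σ)
      = fun i => EuclideanSpace.single ((w ∘ σ) i) (1 : ℝ) := rfl
  rw [h2] at h
  rw [wter, wter, h, Units.smul_def, ← Int.cast_smul_eq_zsmul ℝ]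

lemma wter_snoc {n k : ℕ} (w : Fin k → Fin n) (j : Fin n) :
    wter n (k+1) (Fin.snoc w j)
      = wter n k w * ExteriorAlgebra.ι ℝ (EuclideanSpace.single j (1 : ℝ)) := by
  rw [wter_eq_prod, wter_eq_prod, List.ofFn_succ']
  simp [List.concat_eq_append]

lemma deltaWedge_eq {n k : ℕ} (S : Finset (Fin n)) (h : S.card = k) :
    deltaWedge n S = wter n k (fun i => S.orderEmbOfFin h i) := by
  rw [wter_eq_prod, deltaWedge]
  congr 1
  apply List.ext_getElem
  · simp [h]
  · intro i h1 h2
    simp [Finset.orderEmbOfFin_apply]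

/-- With `f : 𝒫({1,…,n}) → [-1,1]` (`n ≥ 1`), `g` defined from `f` by the
signed sum over permutations, `P (δ S) = f S • δ S`, `α = (1/√n)(δ{1} + ⋯ + δ{n})` and
`R : φ ↦ φ ∧ α`, one has `g(N) • δ_N = √n ^ n • (P ∘ R)^n (δ_∅)`. -/
theorem gN_deltaN_eq_iterate (n : ℕ) (hn : 1 ≤ n)
    (f : Finset (Fin n) → ℝ) (hf : ∀ S : Finset (Fin n), f S ∈ Set.Icc (-1 : ℝ) 1)
    (g : Finset (Fin n) → ℝ)
    (hg : ∀ T : Finset (Fin n),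
      g T = ∑ σ : Equiv.Perm (Fin T.card),
        ((Equiv.Perm.sign σ : ℤ) : ℝ) *
          ∏ i : Fin T.card,
            f ((Finset.Iic i).image fun j => T.orderEmbOfFin rfl (σ j)))
    (P R : ExteriorAlgebra ℝ (EuclideanSpace ℝ (Fin n)) →ₗ[ℝ]
           ExteriorAlgebra ℝ (EuclideanSpace ℝ (Fin n)))
    (hP : ∀ S : Finset (Fin n), P (deltaWedge n S) = f S • deltaWedge n S)
    (hR : ∀ φ : ExteriorAlgebra ℝ (EuclideanSpace ℝ (Fin n)),
      R φ = φ * ExteriorAlgebra.ι ℝ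
        ((Real.sqrt n)⁻¹ • ∑ i : Fin n, EuclideanSpace.single i (1 : ℝ))) :
    g Finset.univ • deltaWedge n Finset.univ
      = (Real.sqrt n ^ n) •
        ((fun v => P (R v))^[n] (deltaWedge n (∅ : Finset (Fin n)))) := by
  classical
  set s : EuclideanSpace ℝ (Fin n) := ∑ i : Fin n, EuclideanSpace.single i (1 : ℝ) with hs
  set c : ℝ := (Real.sqrt n)⁻¹ with hc
  -- Step 1: remove the scalar factor
  have hcs : ∀ (k : ℕ) (x : ExteriorAlgebra ℝ (EuclideanSpace ℝ (Fin n))),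
      (fun v => P (R v))^[k] x
        = c ^ k • (fun v => P (v * ExteriorAlgebra.ι ℝ s))^[k] x := by
    intro k
    induction k with
    | zero => intro x; simp
    | succ k ih =>
      intro x
      rw [Function.iterate_succ_apply', Function.iterate_succ_apply', ih]
      rw [hR, map_smul, smul_mul_assoc, mul_smul_comm, map_smul, map_smul, smul_smul, pow_succ]
  have hsqrt : Real.sqrt n ≠ 0 := by
    refine ne_of_gt (Real.sqrt_pos.mpr ?_)
    exact_mod_cast Nat.lt_of_lt_of_le Nat.zero_lt_one hn
  rw [hcs n, smul_smul, ← mul_pow, mul_inv_cancel₀ hsqrt, one_pow, one_smul]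
  -- Step 2: P acting on wter
  have KP : ∀ (k : ℕ) (w : Fin k → Fin n),
      P (wter n k w) = f (Finset.image w Finset.univ) • wter n k w := by
    intro k w
    by_cases hw : Function.Injective w
    · have hS : (Finset.image w Finset.univ).card = k := by
        rw [Finset.card_image_of_injective _ hw, Finset.card_univ, Fintype.card_fin]
      set S := Finset.image w Finset.univ with hSdef
      have minj : Function.Injective (fun i => S.orderEmbOfFin hS i) := fun a b hab => by
        exact (S.orderEmbOfFin hS).injective hab
      have hrw : Set.range w = ↑S := by
        ext x; simp [hSdef, eq_comm]
      have hrm : Set.range (fun i => S.orderEmbOfFin hS i) = ↑S := by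
        simpa using Finset.range_orderEmbOfFin S hS
      let e1 : Fin k ≃ ↥(↑S : Set (Fin n)) :=
        (Equiv.ofInjective w hw).trans (Equiv.setCongr hrw)
      let e2 : Fin k ≃ ↥(↑S : Set (Fin n)) :=
        (Equiv.ofInjective _ minj).trans (Equiv.setCongr hrm)
      let π : Equiv.Perm (Fin k) := e1.trans e2.symm
      have key : ∀ i, S.orderEmbOfFin hS (π i) = w i := by
        intro i
        have h3 : (↑(e2 (π i)) : Fin n) = ↑(e1 i) := by
          simp only [π, Equiv.trans_apply, Equiv.apply_symm_apply]
        simp only [e1, e2, Equiv.trans_apply, Equiv.ofInjective_apply, Equiv.setCongr_apply] at h3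
        exact h3
      have hwt : wter n k w = ((Equiv.Perm.sign π : ℤ) : ℝ) • deltaWedge n S := by
        rw [deltaWedge_eq S hS, ← wter_comp_perm _ π]
        congr 1
        funext i
        exact (key i).symm
      rw [hwt, map_smul, hP, smul_comm]
    · rw [wter_zero hw]
      simp
  -- Step 3: main induction
  have Hmain : ∀ k : ℕ,
      (fun v => P (v * ExteriorAlgebra.ι ℝ s))^[k] (deltaWedge n (∅ : Finset (Fin n)))
        = ∑ w : Fin k → Fin n,
            (∏ i : Fin k, f ((Finset.Iic i).image w)) • wter n k w := by
    intro k
    induction k with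
    | zero =>
      have h1 : deltaWedge n (∅ : Finset (Fin n)) = 1 := by simp [deltaWedge]
      have h2 : ∀ w : Fin 0 → Fin n, wter n 0 w = 1 := by
        intro w; rw [wter_eq_prod]; simp
      simp [h1, h2]
    | succ k ih =>
      rw [Function.iterate_succ_apply', ih]
      have hι : ExteriorAlgebra.ι ℝ s
          = ∑ j : Fin n, ExteriorAlgebra.ι ℝ (EuclideanSpace.single j (1 : ℝ)) := by
        rw [hs, map_sum]
      have term : ∀ w : Fin k → Fin n,
          P (((∏ i : Fin k, f ((Finset.Iic i).image w)) • wter n k w)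
              * ExteriorAlgebra.ι ℝ s)
            = ∑ j : Fin n,
                ((∏ i : Fin k, f ((Finset.Iic i).image w))
                   * f (Finset.image (Fin.snoc w j) Finset.univ))
                  • wter n (k+1) (Fin.snoc w j) := by
        intro w
        rw [smul_mul_assoc, hι, Finset.mul_sum]
        simp only [← wter_snoc]
        rw [map_smul, map_sum, Finset.smul_sum]
        refine Finset.sum_congr rfl fun j _ => ?_
        rw [KP, smul_smul]
      rw [Finset.sum_mul, map_sum]
      simp only [term]
      rw [← Equiv.sum_comp (Fin.snocEquiv (fun _ => Fin n))
          (fun w' => (∏ i : Fin (k+1), f ((Finset.Iic i).image w'))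
            • wter n (k+1) w'), Fintype.sum_prod_type]
      rw [Finset.sum_comm]
      refine Finset.sum_congr rfl fun j _ => Finset.sum_congr rfl fun w _ => ?_
      have hse : (Fin.snocEquiv (fun _ => Fin n)) (j, w) = Fin.snoc w j := rfl
      rw [hse]
      have hlast : (Finset.Iic (Fin.last k)).image (Fin.snoc w j : Fin (k+1) → Fin n)
          = Finset.image (Fin.snoc w j) Finset.univ := by
        congr 1
        ext x
        simp [Fin.le_last]
      have hcs : ∀ i : Fin k,
          (Finset.Iic (Fin.castSucc i)).image (Fin.snoc w j : Fin (k+1) → Fin n)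
            = (Finset.Iic i).image w := by
        intro i
        have h1 : Finset.Iic (Fin.castSucc i) = (Finset.Iic i).image Fin.castSucc := by
          ext y
          simp only [Finset.mem_Iic, Finset.mem_image]
          constructor
          · intro hy
            have hyk : (y : ℕ) < k := lt_of_le_of_lt hy i.isLt
            refine ⟨⟨y.val, hyk⟩, ?_, ?_⟩
            · exact hy
            · apply Fin.ext
              simp
          · rintro ⟨z, hz, rfl⟩
            exact Fin.castSucc_le_castSucc_iff.mpr hz
        rw [h1, Finset.image_image]
        congr 1
        funext z
        simp
      rw [Fin.prod_univ_castSucc]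
      simp only [hcs, hlast]
  rw [Hmain n]
  have hcn : (Finset.univ : Finset (Fin n)).card = n := by simp
  -- restrict to injective maps
  rw [← Finset.sum_filter_of_ne
    (p := fun w : Fin n → Fin n => Function.Injective w)
    (fun w _ hne => by
      by_contra hw
      exact hne (by rw [wter_zero hw, smul_zero]))]
  have hbij : ∑ σ : Equiv.Perm (Fin n),
        (∏ i : Fin n, f ((Finset.Iic i).image fun j => σ j)) • wter n n (fun j => σ j)
      = ∑ w ∈ Finset.univ.filter (fun w : Fin n → Fin n => Function.Injective w),
          (∏ i : Fin n, f ((Finset.Iic i).image w)) • wter n n w := by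
    refine Finset.sum_bij (fun σ _ => (fun j => σ j : Fin n → Fin n)) ?_ ?_ ?_ ?_
    · intro σ _
      simp only [Finset.mem_filter, Finset.mem_univ, true_and]
      exact σ.injective
    · intro a _ b _ hab
      exact Equiv.coe_fn_injective hab
    · intro w hw
      simp only [Finset.mem_filter, Finset.mem_univ, true_and] at hw
      have hbj : Function.Bijective w := Finite.injective_iff_bijective.mp hw
      exact ⟨Equiv.ofBijective w hbj, Finset.mem_univ _, rfl⟩
    · intro σ _
      rfl
  rw [← hbij]
  have hid : (fun i : Fin n => (Finset.univ : Finset (Fin n)).orderEmbOfFin hcn i)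
      = (id : Fin n → Fin n) :=
    (Finset.orderEmbOfFin_unique hcn (fun x => Finset.mem_univ _) strictMono_id).symm
  have hδ : deltaWedge n (Finset.univ : Finset (Fin n)) = wter n n (id : Fin n → Fin n) := by
    rw [deltaWedge_eq Finset.univ hcn, hid]
  have hwσ : ∀ σ : Equiv.Perm (Fin n),
      wter n n (fun j => σ j)
        = ((Equiv.Perm.sign σ : ℤ) : ℝ) • deltaWedge n (Finset.univ : Finset (Fin n)) := by
    intro σ
    have h0 : (fun j => σ j) = (id : Fin n → Fin n) ∘ ⇑σ := rfl
    rw [h0, wter_comp_perm, ← hδ]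
  simp_rw [hwσ, smul_smul, ← Finset.sum_smul]
  congr 1
  -- now identify g univ with the permutation sum
  have hm' : (fun x : Fin (Finset.univ : Finset (Fin n)).card =>
        ((Finset.univ : Finset (Fin n)).orderEmbOfFin rfl) x)
      = fun x => Fin.cast hcn x := by
    symm
    apply Finset.orderEmbOfFin_unique
    · intro x
      exact Finset.mem_univ _
    · intro a b hab
      exact hab
  have hIic : ∀ i : Fin (Finset.univ : Finset (Fin n)).card,
      Finset.Iic (Fin.cast hcn i) = (Finset.Iic i).image (Fin.cast hcn) := by
    intro i
    ext y
    simp only [Finset.mem_Iic, Finset.mem_image]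
    constructor
    · intro hy
      exact ⟨Fin.cast hcn.symm y, hy, rfl⟩
    · rintro ⟨z, hz, rfl⟩
      exact hz
  rw [hg]
  refine Fintype.sum_equiv (Equiv.permCongr (finCongr hcn)) _ _ ?_
  intro σ'
  have hsign : Equiv.Perm.sign ((finCongr hcn).permCongr σ') = Equiv.Perm.sign σ' :=
    Equiv.Perm.sign_permCongr (finCongr hcn) σ'
  rw [mul_comm]
  congr 1
  · refine Fintype.prod_equiv (finCongr hcn) _ _ ?_
    intro i
    congr 1
    have happ : ∀ j, ((finCongr hcn).permCongr σ') (finCongr hcn j) = finCongr hcn (σ' j) := by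
      intro j
      rw [Equiv.permCongr_apply, Equiv.symm_apply_apply]
    calc (Finset.Iic i).image (fun j => (Finset.univ.orderEmbOfFin rfl) (σ' j))
        = (Finset.Iic i).image (fun j => Fin.cast hcn (σ' j)) := by
          refine Finset.image_congr fun j _ => ?_
          exact congrFun hm' (σ' j)
      _ = (Finset.Iic i).image
            (fun j => ((finCongr hcn).permCongr σ') (Fin.cast hcn j)) := by
          refine Finset.image_congr fun j _ => ?_
          simpa only [finCongr_apply] using (happ j).symm
      _ = ((Finset.Iic i).image (Fin.cast hcn)).image ((finCongr hcn).permCongr σ') := by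
          rw [Finset.image_image]
          rfl
      _ = (Finset.Iic (finCongr hcn i)).image ((finCongr hcn).permCongr σ') := by
          rw [finCongr_apply, ← hIic]
  · rw [hsign]
end
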